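/- Let H be the 5-dimensional complex Heisenberg Lie algebra with basis r₋₂, r₋₁, r₀, r₁, r₂ and brackets [r₋₁, r₁] = r₀, [r₂, r₋₂] = r₀, and [r_i, r_j] = 0 whenever i + j ≠ 0, and let w = H ⊕ sl₂(ℂ[X]) be the direct sum of Lie algebras, where sl₂(ℂ[X]) is the Lie algebra of 2×2 trace-zero matrices over ℂ[X] with y = E₁₂, z = E₂₁, h = E₁₁ − E₂₂. Set X₁ = r₁ − (1/2)y + (1/2)X·z, X₂ = r₋₁ + z, X₃ = r₋₂, and A(u) = X₁ + (u/3)·X₂ + (u²/6)·X₃ for u ∈ ℂ. Let we^1 = span_ℂ{X₂, X₃}, and let we^2 be the Lie subalgebra of w generated by we^1 together with all brackets [x, A(u)] with x ∈ we^1 and u ∈ ℂ. Then we^2 = span_ℂ{r₋₂, r₋₁, z, 2r₀ + h}. -/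

import Mathlib

open Polynomial Matrix

attribute [local instance 100] LieRing.ofAssociativeRing

/-- Ambient associative algebra containing the Wahlquist–Estabrook algebra
`w = H ⊕ sl₂(ℂ[X])` of KdV: the 5-dimensional Heisenberg algebra `H` is
realized inside `4×4` strictly upper-triangular complex matrices
(`r₋₁ = E₁₂, r₁ = E₂₄, r₂ = E₁₃, r₋₂ = E₃₄, r₀ = E₁₄`, so that
`[r₋₁,r₁] = [r₂,r₋₂] = r₀` and all other brackets of basis elements vanish),
and `sl₂(ℂ[X])` inside `2×2` matrices over `ℂ[X]`; the two factors of the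
product commute, and the bracket is the componentwise commutator. -/
abbrev WEAmb := Matrix (Fin 4) (Fin 4) ℂ × Matrix (Fin 2) (Fin 2) ℂ[X]

noncomputable def rHeis : ℤ → WEAmb
  | -1 => (Matrix.single 0 1 1, 0)
  | 1 => (Matrix.single 1 3 1, 0)
  | 2 => (Matrix.single 0 2 1, 0)
  | -2 => (Matrix.single 2 3 1, 0)
  | 0 => (Matrix.single 0 3 1, 0)
  | _ => 0

noncomputable def yE : WEAmb := (0, Matrix.single 0 1 1)
noncomputable def zE : WEAmb := (0, Matrix.single 1 0 1)
noncomputable def hE : WEAmb :=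
  (0, Matrix.single 0 0 1 - Matrix.single 1 1 1)
/-- `X·z`, the element `λ z` of `sl₂(ℂ[X])`. -/
noncomputable def zXE : WEAmb := (0, (X : ℂ[X]) • Matrix.single 1 0 1)

/-- `X₁ = r₁ − (1/2)y + (1/2)X·z`. -/
noncomputable def X₁E : WEAmb := rHeis 1 - (2⁻¹ : ℂ) • yE + (2⁻¹ : ℂ) • zXE
/-- `X₂ = r₋₁ + z`. -/
noncomputable def X₂E : WEAmb := rHeis (-1) + zE
/-- `X₃ = r₋₂`. -/
noncomputable def X₃E : WEAmb := rHeis (-2)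

/-- `A(u) = X₁ + (u/3)X₂ + (u²/6)X₃`, the `x`-part of the universal
zero-curvature representation of KdV. -/
noncomputable def AKdV (u : ℂ) : WEAmb := X₁E + (u / 3) • X₂E + (u ^ 2 / 6) • X₃E

/- ## Auxiliary computations -/

lemma WE_rm1 : rHeis (-1) = ((Matrix.single 0 1 1, 0) : WEAmb) := rfl
lemma WE_r1 : rHeis 1 = ((Matrix.single 1 3 1, 0) : WEAmb) := rfl
lemma WE_rm2 : rHeis (-2) = ((Matrix.single 2 3 1, 0) : WEAmb) := rfl
lemma WE_r0 : rHeis 0 = ((Matrix.single 0 3 1, 0) : WEAmb) := rfl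

lemma WE_lieFst (a c : Matrix (Fin 4) (Fin 4) ℂ) :
    ⁅((a, 0) : WEAmb), ((c, 0) : WEAmb)⁆ = (a * c - c * a, 0) := by
  rw [Ring.lie_def]; simp [Prod.mk_mul_mk, Prod.mk_sub_mk]

lemma WE_lieSnd (b d : Matrix (Fin 2) (Fin 2) ℂ[X]) :
    ⁅((0, b) : WEAmb), ((0, d) : WEAmb)⁆ = (0, b * d - d * b) := by
  rw [Ring.lie_def]; simp [Prod.mk_mul_mk, Prod.mk_sub_mk]

lemma WE_crossA (a : Matrix (Fin 4) (Fin 4) ℂ) (b : Matrix (Fin 2) (Fin 2) ℂ[X]) :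
    ⁅((a, 0) : WEAmb), ((0, b) : WEAmb)⁆ = 0 := by
  rw [Ring.lie_def]; simp [Prod.mk_mul_mk]

lemma WE_crossB (a : Matrix (Fin 4) (Fin 4) ℂ) (b : Matrix (Fin 2) (Fin 2) ℂ[X]) :
    ⁅((0, b) : WEAmb), ((a, 0) : WEAmb)⁆ = 0 := by
  rw [Ring.lie_def]; simp [Prod.mk_mul_mk]

lemma lie_rm1_r1 : ⁅rHeis (-1), rHeis 1⁆ = rHeis 0 := by
  rw [WE_rm1, WE_r1, WE_lieFst, WE_r0]; simp

lemma lie_rm1_rm2 : ⁅rHeis (-1), rHeis (-2)⁆ = 0 := by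
  rw [WE_rm1, WE_rm2, WE_lieFst]; simp [Prod.ext_iff]

lemma lie_rm2_r1 : ⁅rHeis (-2), rHeis 1⁆ = 0 := by
  rw [WE_rm2, WE_r1, WE_lieFst]; simp [Prod.ext_iff]

lemma lie_rm2_rm1 : ⁅rHeis (-2), rHeis (-1)⁆ = 0 := by
  rw [WE_rm2, WE_rm1, WE_lieFst]; simp [Prod.ext_iff]

lemma lie_rm1_r0 : ⁅rHeis (-1), rHeis 0⁆ = 0 := by
  rw [WE_rm1, WE_r0, WE_lieFst]; simp [Prod.ext_iff]

lemma lie_rm2_r0 : ⁅rHeis (-2), rHeis 0⁆ = 0 := by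
  rw [WE_rm2, WE_r0, WE_lieFst]; simp [Prod.ext_iff]

lemma lie_z_y : ⁅zE, yE⁆ = -hE := by
  rw [zE, yE, WE_lieSnd, hE]
  simp [Prod.ext_iff]

lemma lie_z_zX : ⁅zE, zXE⁆ = 0 := by
  rw [zE, zXE, WE_lieSnd]
  simp [Prod.ext_iff, mul_smul_comm, smul_mul_assoc]

lemma lie_z_h : ⁅zE, hE⁆ = (2 : ℂ) • zE := by
  rw [zE, hE, WE_lieSnd]
  refine Prod.ext (by simp) ?_
  show _ = (2 : ℂ) • single 1 0 1
  rw [mul_sub, sub_mul]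
  simp
  ext i j
  fin_cases i <;> fin_cases j <;>
    simp [Matrix.single, Algebra.smul_def, Polynomial.coeff_one, Polynomial.coeff_C] <;>
    split <;> norm_num

lemma lie_rm1_y : ⁅rHeis (-1), yE⁆ = 0 := by rw [WE_rm1, yE]; exact WE_crossA _ _
lemma lie_rm1_zX : ⁅rHeis (-1), zXE⁆ = 0 := by rw [WE_rm1, zXE]; exact WE_crossA _ _
lemma lie_rm1_z : ⁅rHeis (-1), zE⁆ = 0 := by rw [WE_rm1, zE]; exact WE_crossA _ _
lemma lie_rm1_h : ⁅rHeis (-1), hE⁆ = 0 := by rw [WE_rm1, hE]; exact WE_crossA _ _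
lemma lie_rm2_y : ⁅rHeis (-2), yE⁆ = 0 := by rw [WE_rm2, yE]; exact WE_crossA _ _
lemma lie_rm2_zX : ⁅rHeis (-2), zXE⁆ = 0 := by rw [WE_rm2, zXE]; exact WE_crossA _ _
lemma lie_rm2_z : ⁅rHeis (-2), zE⁆ = 0 := by rw [WE_rm2, zE]; exact WE_crossA _ _
lemma lie_rm2_h : ⁅rHeis (-2), hE⁆ = 0 := by rw [WE_rm2, hE]; exact WE_crossA _ _
lemma lie_z_r1 : ⁅zE, rHeis 1⁆ = 0 := by rw [WE_r1, zE]; exact WE_crossB _ _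
lemma lie_z_rm1 : ⁅zE, rHeis (-1)⁆ = 0 := by rw [WE_rm1, zE]; exact WE_crossB _ _
lemma lie_z_rm2 : ⁅zE, rHeis (-2)⁆ = 0 := by rw [WE_rm2, zE]; exact WE_crossB _ _
lemma lie_z_r0 : ⁅zE, rHeis 0⁆ = 0 := by rw [WE_r0, zE]; exact WE_crossB _ _

/-- the element `2r₀ + h` -/
noncomputable def g₄E : WEAmb := (2 : ℂ) • rHeis 0 + hE

lemma lie_X₂_X₁ : ⁅X₂E, X₁E⁆ = (2⁻¹ : ℂ) • g₄E := by
  simp only [X₂E, X₁E, g₄E, lie_add, add_lie, lie_sub, lie_smul,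
    lie_rm1_r1, lie_rm1_y, lie_rm1_zX, lie_z_r1, lie_z_y, lie_z_zX]
  module

lemma lie_X₂_X₃ : ⁅X₂E, X₃E⁆ = 0 := by
  simp only [X₂E, X₃E, add_lie, lie_rm1_rm2, lie_z_rm2, add_zero]

lemma lie_X₂_A (u : ℂ) : ⁅X₂E, AKdV u⁆ = (2⁻¹ : ℂ) • g₄E := by
  simp only [AKdV, lie_add, lie_smul, lie_X₂_X₁, lie_X₂_X₃, lie_self,
    smul_zero, add_zero]

lemma lie_X₃_A (u : ℂ) : ⁅X₃E, AKdV u⁆ = 0 := by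
  simp only [AKdV, X₃E, X₁E, X₂E, lie_add, lie_sub, lie_smul, lie_self,
    lie_rm2_r1, lie_rm2_y, lie_rm2_zX, lie_rm2_rm1, lie_rm2_z]
  simp

lemma lie_X₂_g₄ : ⁅X₂E, g₄E⁆ = (2 : ℂ) • zE := by
  simp only [X₂E, g₄E, lie_add, add_lie, lie_smul, lie_rm1_r0, lie_rm1_h,
    lie_z_r0, lie_z_h, smul_zero, zero_add, add_zero]

/- ## The target span is a Lie subalgebra -/

lemma span_closed :
    ∀ x ∈ Submodule.span ℂ {rHeis (-2), rHeis (-1), zE, g₄E},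
    ∀ y ∈ Submodule.span ℂ {rHeis (-2), rHeis (-1), zE, g₄E},
      ⁅x, y⁆ ∈ Submodule.span ℂ {rHeis (-2), rHeis (-1), zE, g₄E} := by
  set S := Submodule.span ℂ {rHeis (-2), rHeis (-1), zE, g₄E} with hS
  have key : ∀ a ∈ ({rHeis (-2), rHeis (-1), zE, g₄E} : Set WEAmb),
      ∀ b ∈ ({rHeis (-2), rHeis (-1), zE, g₄E} : Set WEAmb), ⁅a, b⁆ ∈ S := by
    have hz : zE ∈ S := Submodule.subset_span (by simp)
    have hg4 : ⁅zE, g₄E⁆ = (2 : ℂ) • zE := by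
      simp only [g₄E, lie_add, lie_smul, lie_z_r0, lie_z_h, smul_zero, zero_add]
    have hrm2 : ∀ b ∈ ({rHeis (-2), rHeis (-1), zE, g₄E} : Set WEAmb),
        ⁅rHeis (-2), b⁆ = 0 := by
      rintro b (rfl | rfl | rfl | rfl)
      · exact lie_self _
      · exact lie_rm2_rm1
      · exact lie_rm2_z
      · simp only [g₄E, lie_add, lie_smul, lie_rm2_r0, lie_rm2_h, smul_zero, add_zero]
    have hrm1 : ∀ b ∈ ({rHeis (-2), rHeis (-1), zE, g₄E} : Set WEAmb),
        ⁅rHeis (-1), b⁆ = 0 := by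
      rintro b (rfl | rfl | rfl | rfl)
      · exact lie_rm1_rm2
      · exact lie_self _
      · exact lie_rm1_z
      · simp only [g₄E, lie_add, lie_smul, lie_rm1_r0, lie_rm1_h, smul_zero, add_zero]
    rintro a (rfl | rfl | rfl | rfl) b hb
    · rw [hrm2 b hb]; exact S.zero_mem
    · rw [hrm1 b hb]; exact S.zero_mem
    · rcases hb with rfl | rfl | rfl | rfl
      · rw [lie_z_rm2]; exact S.zero_mem
      · rw [lie_z_rm1]; exact S.zero_mem
      · rw [lie_self]; exact S.zero_mem
      · rw [hg4]; exact S.smul_mem _ hz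
    · rcases hb with rfl | rfl | rfl | rfl
      · rw [← lie_skew, hrm2 g₄E (by simp [Set.mem_insert_iff])]
        simpa using S.zero_mem
      · rw [← lie_skew, hrm1 g₄E (by simp [Set.mem_insert_iff])]
        simpa using S.zero_mem
      · rw [← lie_skew, hg4]
        exact S.neg_mem (S.smul_mem _ hz)
      · rw [lie_self]; exact S.zero_mem
  intro x hx
  induction hx using Submodule.span_induction with
  | mem a ha =>
    intro y hy
    induction hy using Submodule.span_induction with
    | mem b hb => exact key a ha b hb
    | zero => rw [lie_zero]; exact S.zero_mem
    | add b c _ _ h1 h2 => rw [lie_add]; exact S.add_mem h1 h2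
    | smul t b _ h => rw [lie_smul]; exact S.smul_mem t h
  | zero => intro y hy; rw [zero_lie]; exact S.zero_mem
  | add a b _ _ h1 h2 =>
    intro y hy; rw [add_lie]; exact S.add_mem (h1 y hy) (h2 y hy)
  | smul t a _ h =>
    intro y hy; rw [smul_lie]; exact S.smul_mem t (h y hy)

noncomputable def SLie : LieSubalgebra ℂ WEAmb :=
  { Submodule.span ℂ {rHeis (-2), rHeis (-1), zE, g₄E} with
    lie_mem' := fun hx hy => span_closed _ hx _ hy }

lemma mem_SLie_iff (x : WEAmb) :
    x ∈ SLie ↔ x ∈ Submodule.span ℂ {rHeis (-2), rHeis (-1), zE, g₄E} :=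
  Iff.rfl

/-- With `we¹ = span_ℂ{X₂, X₃}`, the Lie subalgebra `we²` generated by `we¹`
together with all brackets `⁅x, A(u)⁆` (`x ∈ we¹`, `u ∈ ℂ`) equals
`span_ℂ{r₋₂, r₋₁, z, 2r₀ + h}`. -/
theorem stmt13 (we₁ : Set WEAmb)
    (hwe₁ : we₁ = ↑(Submodule.span ℂ {X₂E, X₃E}))
    (we₂ : LieSubalgebra ℂ WEAmb)
    (hwe₂ : we₂ = LieSubalgebra.lieSpan ℂ WEAmb
      (we₁ ∪ {a | ∃ x ∈ we₁, ∃ u : ℂ, a = ⁅x, AKdV u⁆})) :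
    we₂.toSubmodule
      = Submodule.span ℂ {rHeis (-2), rHeis (-1), zE, (2 : ℂ) • rHeis 0 + hE} := by
  subst hwe₁ hwe₂
  have hg₄eq : ((2 : ℂ) • rHeis 0 + hE) = g₄E := rfl
  rw [hg₄eq]
  set S := Submodule.span ℂ {rHeis (-2), rHeis (-1), zE, g₄E} with hS
  have hm1S : rHeis (-2) ∈ S := Submodule.subset_span (by simp)
  have hm2S : rHeis (-1) ∈ S := Submodule.subset_span (by simp)
  have hzS : zE ∈ S := Submodule.subset_span (by simp)
  have hg4S : g₄E ∈ S := Submodule.subset_span (by simp [Set.mem_insert_iff])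
  have hX₂S : X₂E ∈ S := by rw [X₂E]; exact S.add_mem hm2S hzS
  have hX₃S : X₃E ∈ S := hm1S
  have hX₂we₁ : X₂E ∈ (↑(Submodule.span ℂ {X₂E, X₃E}) : Set WEAmb) :=
    Submodule.subset_span (Set.mem_insert _ _)
  have hX₃we₁ : X₃E ∈ (↑(Submodule.span ℂ {X₂E, X₃E}) : Set WEAmb) :=
    Submodule.subset_span (Set.mem_insert_of_mem _ rfl)
  set G : Set WEAmb :=
    (↑(Submodule.span ℂ {X₂E, X₃E}) : Set WEAmb) ∪
      {a | ∃ x ∈ (↑(Submodule.span ℂ {X₂E, X₃E}) : Set WEAmb), ∃ u : ℂ, a = ⁅x, AKdV u⁆}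
    with hG
  apply le_antisymm
  · -- lieSpan ≤ S, via the Lie subalgebra SLie
    have hGsub : G ⊆ SLie := by
      rintro a (ha | ⟨x, hx, u, rfl⟩)
      · -- a ∈ span {X₂E, X₃E} ⊆ S
        refine (Submodule.span_le.mpr ?_ : Submodule.span ℂ {X₂E, X₃E} ≤ S) ha
        rintro b (rfl | rfl)
        · exact hX₂S
        · exact hX₃S
      · -- bracket with A(u)
        have : ∀ x ∈ Submodule.span ℂ {X₂E, X₃E}, ⁅x, AKdV u⁆ ∈ S := by
          intro x hx
          induction hx using Submodule.span_induction with
          | mem b hb =>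
            rcases hb with rfl | rfl
            · rw [lie_X₂_A]; exact S.smul_mem _ hg4S
            · rw [lie_X₃_A]; exact S.zero_mem
          | zero => rw [zero_lie]; exact S.zero_mem
          | add b c _ _ h1 h2 => rw [add_lie]; exact S.add_mem h1 h2
          | smul t b _ h => rw [smul_lie]; exact S.smul_mem t h
        exact this x hx
    intro a ha
    exact (LieSubalgebra.lieSpan_le.mpr hGsub) ha
  · -- S ≤ lieSpan G
    set K := LieSubalgebra.lieSpan ℂ WEAmb G with hK
    have hX₂K : X₂E ∈ K := LieSubalgebra.subset_lieSpan (Or.inl hX₂we₁)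
    have hX₃K : X₃E ∈ K := LieSubalgebra.subset_lieSpan (Or.inl hX₃we₁)
    have hbK : ⁅X₂E, AKdV 0⁆ ∈ K :=
      LieSubalgebra.subset_lieSpan (Or.inr ⟨X₂E, hX₂we₁, 0, rfl⟩)
    rw [lie_X₂_A] at hbK
    have hg₄K : g₄E ∈ K := by
      have h2 := K.smul_mem (2 : ℂ) hbK
      rw [smul_smul] at h2
      norm_num at h2
      exact h2
    have hzK : zE ∈ K := by
      have h3 := K.lie_mem hX₂K hg₄K
      rw [lie_X₂_g₄] at h3
      have h4 := K.smul_mem (2⁻¹ : ℂ) h3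
      rw [smul_smul] at h4
      norm_num at h4
      exact h4
    have hm2K : rHeis (-1) ∈ K := by
      have : rHeis (-1) = X₂E - zE := by rw [X₂E]; abel
      rw [this]; exact K.sub_mem hX₂K hzK
    rw [hS]
    apply Submodule.span_le.mpr
    rintro b (rfl | rfl | rfl | rfl)
    · exact hX₃K
    · exact hm2K
    · exact hzK
    · exact hg₄K
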